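/- arXiv:1210.5364 — 4 statements merged into one kernel-verified Lean document; each statement's English description precedes it below -/
import Mathlib

section
/- With μ₁, μ₂ ∈ [0,1] and λ as in the previous construction, for every x ∈ [0,1] one has |(μ₁ − λμ₂ + λ x) − x| ≤ Δ(μ₁, μ₂), where Δ(μ₁, μ₂) := (1 − μ₁/μ₂)·𝟙{μ₁ < μ₂} + ((μ₁ − μ₂)/(1 − μ₂))·𝟙{μ₁ > μ₂}. -/
/-- With `μ₁, μ₂ ∈ [0,1]` and `λ` as before, for every `x ∈ [0,1]`,
`|(μ₁ - λμ₂ + λx) - x| ≤ Δ(μ₁,μ₂)` where `Δ` is defined casewise. -/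
theorem stmt4 (μ₁ μ₂ : ℝ) (h₁ : μ₁ ∈ Set.Icc (0:ℝ) 1) (h₂ : μ₂ ∈ Set.Icc (0:ℝ) 1)
    (lam Δ : ℝ)
    (hlam : lam = if μ₂ < μ₁ then (1 - μ₁) / (1 - μ₂)
      else if μ₁ < μ₂ then μ₁ / μ₂ else 1)
    (hΔ : Δ = if μ₁ < μ₂ then 1 - μ₁ / μ₂
      else if μ₂ < μ₁ then (μ₁ - μ₂) / (1 - μ₂) else 0) :
    ∀ x ∈ Set.Icc (0:ℝ) 1, |(μ₁ - lam * μ₂ + lam * x) - x| ≤ Δ := by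
  obtain ⟨h10, h11⟩ := h₁
  obtain ⟨h20, h21⟩ := h₂
  intro x ⟨hx0, hx1⟩
  rcases lt_trichotomy μ₁ μ₂ with h | h | h
  · have hμ2 : (0:ℝ) < μ₂ := lt_of_le_of_lt h10 h
    rw [hlam, hΔ, if_neg (not_lt.2 h.le), if_pos h, if_pos h]
    have hc : μ₁ - μ₁ / μ₂ * μ₂ = 0 := by field_simp; ring
    have hlle : μ₁ / μ₂ ≤ 1 := by
      rw [div_le_one hμ2]; exact h.le
    have hlge : 0 ≤ μ₁ / μ₂ := div_nonneg h10 hμ2.le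
    rw [show μ₁ - μ₁ / μ₂ * μ₂ + μ₁ / μ₂ * x - x
        = (μ₁ - μ₁ / μ₂ * μ₂) - (1 - μ₁ / μ₂) * x by ring, hc]
    rw [abs_of_nonpos (by nlinarith), ]
    nlinarith
  · simp [hlam, hΔ, h, abs_nonneg]
  · have hμ2 : μ₂ < 1 := lt_of_lt_of_le h h11
    have h2 : (0:ℝ) < 1 - μ₂ := by linarith
    rw [hlam, hΔ, if_pos h, if_neg (not_lt.2 h.le), if_pos h]
    set l := (1 - μ₁) / (1 - μ₂) with hl
    have hc : μ₁ - l * μ₂ + l - 1 = 0 := by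
      rw [hl]; field_simp; ring
    have hlle : l ≤ 1 := by
      rw [hl, div_le_one h2]; linarith
    have hlge : 0 ≤ l := div_nonneg (by linarith) h2.le
    have key : μ₁ - l * μ₂ + l * x - x = (1 - l) * (1 - x) := by
      have : μ₁ - l * μ₂ = 1 - l := by linarith
      rw [this]; ring
    rw [key, abs_of_nonneg (by nlinarith)]
    have hΔeq : (μ₁ - μ₂) / (1 - μ₂) = 1 - l := by
      rw [hl]; field_simp; ring
    rw [hΔeq]
    nlinarith
end

section
/- Let Φ : [0,1] → ℝ be non-decreasing and left-continuous at 1. Then the convex envelope Φ̂ of Φ on [0,1] (the largest convex function below Φ) is continuous on the whole interval [0,1]. -/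
/-- The convex envelope on `[0,1]`: the pointwise supremum of all convex functions on
`[0,1]` dominated by `f` there. -/
noncomputable def convEnvOn (f : ℝ → ℝ) (m : ℝ) : ℝ :=
  sSup {y : ℝ | ∃ h : ℝ → ℝ, ConvexOn ℝ (Set.Icc (0:ℝ) 1) h ∧
    (∀ x ∈ Set.Icc (0:ℝ) 1, h x ≤ f x) ∧ y = h m}

/-- The convex envelope of a non-decreasing bounded function `Φ` on `[0,1]`
that is left-continuous at `1` is continuous on the whole interval `[0,1]`. -/
theorem stmt6 (Φ : ℝ → ℝ) (hmono : MonotoneOn Φ (Set.Icc 0 1))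
    (hbdd : ∃ C : ℝ, ∀ x ∈ Set.Icc (0:ℝ) 1, |Φ x| ≤ C)
    (hlc : ContinuousWithinAt Φ (Set.Iic 1) 1) :
    ContinuousOn (convEnvOn Φ) (Set.Icc 0 1) := by
  obtain ⟨C, hC⟩ := hbdd
  set g := convEnvOn Φ with hgdef
  set S : ℝ → Set ℝ := fun m => {y : ℝ | ∃ h : ℝ → ℝ, ConvexOn ℝ (Set.Icc (0:ℝ) 1) h ∧
    (∀ x ∈ Set.Icc (0:ℝ) 1, h x ≤ Φ x) ∧ y = h m} with hSdef
  have h01 : (0:ℝ) ∈ Set.Icc (0:ℝ) 1 := by constructor <;> norm_num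
  have h11 : (1:ℝ) ∈ Set.Icc (0:ℝ) 1 := by constructor <;> norm_num
  have hconstmem : ∀ m : ℝ, Φ 0 ∈ S m := by
    intro m
    exact ⟨fun _ => Φ 0, convexOn_const _ (convex_Icc 0 1),
      fun x hx => hmono h01 hx hx.1, rfl⟩
  have hne : ∀ m : ℝ, (S m).Nonempty := fun m => ⟨Φ 0, hconstmem m⟩
  have hbdd : ∀ m ∈ Set.Icc (0:ℝ) 1, BddAbove (S m) := by
    intro m hm
    refine ⟨C, ?_⟩
    rintro y ⟨h, hconv, hle, rfl⟩
    exact (hle m hm).trans ((abs_le.mp (hC m hm)).2)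
  have hgΦ : ∀ m ∈ Set.Icc (0:ℝ) 1, g m ≤ Φ m := by
    intro m hm
    apply csSup_le (hne m)
    rintro y ⟨h, hconv, hle, rfl⟩
    exact hle m hm
  have hmem_le : ∀ m ∈ Set.Icc (0:ℝ) 1, ∀ y ∈ S m, y ≤ g m :=
    fun m hm y hy => le_csSup (hbdd m hm) hy
  have hΦ0g : ∀ m ∈ Set.Icc (0:ℝ) 1, Φ 0 ≤ g m :=
    fun m hm => hmem_le m hm _ (hconstmem m)
  -- convexity of g
  have hgconv : ConvexOn ℝ (Set.Icc (0:ℝ) 1) g := by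
    refine ⟨convex_Icc 0 1, ?_⟩
    intro x hx y hy a b ha hb hab
    have hmem : a • x + b • y ∈ Set.Icc (0:ℝ) 1 :=
      (convex_Icc 0 1) hx hy ha hb hab
    apply csSup_le (hne _)
    rintro z ⟨h, hconv, hle, rfl⟩
    calc h (a • x + b • y) ≤ a • h x + b • h y := hconv.2 hx hy ha hb hab
      _ ≤ a • g x + b • g y := by
          simp only [smul_eq_mul]
          gcongr
          · exact hmem_le x hx _ ⟨h, hconv, hle, rfl⟩
          · exact hmem_le y hy _ ⟨h, hconv, hle, rfl⟩
  have hg01 : g 0 ≤ g 1 := (hgΦ 0 h01).trans (hΦ0g 1 h11)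
  have hCnn : (0:ℝ) ≤ C := (abs_nonneg _).trans (hC 0 h01)
  -- upper chord bound
  have hup : ∀ m ∈ Set.Icc (0:ℝ) 1, g m ≤ (1 - m) * g 0 + m * g 1 := by
    intro m hm
    have := hgconv.2 h01 h11 (by linarith [hm.2] : (0:ℝ) ≤ 1 - m) hm.1 (by ring)
    simpa [smul_eq_mul] using this
  -- key lower bound near 1
  have hkey : ∀ ε > (0:ℝ), ∃ K ≥ (0:ℝ), ∀ m ∈ Set.Icc (0:ℝ) 1,
      g 1 - ε + K * (m - 1) ≤ g m := by
    intro ε hε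
    obtain ⟨δ, hδ, hH⟩ := Metric.continuousWithinAt_iff.mp hlc ε hε
    set δ' : ℝ := min (δ/2) 1 with hδ'def
    have hδ'pos : 0 < δ' := lt_min (by linarith) one_pos
    have hδ'le : δ' ≤ 1 := min_le_right _ _
    set K : ℝ := 2 * C / δ' with hKdef
    have hKnn : 0 ≤ K := div_nonneg (by linarith) hδ'pos.le
    refine ⟨K, hKnn, ?_⟩
    set ℓ : ℝ → ℝ := fun x => g 1 - ε + K * (x - 1) with hℓdef
    have hℓconv : ConvexOn ℝ (Set.Icc (0:ℝ) 1) ℓ := by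
      refine ⟨convex_Icc 0 1, ?_⟩
      intro x hx y hy a b ha hb hab
      apply le_of_eq
      simp only [hℓdef, smul_eq_mul]
      linear_combination (ε + K - g 1) * hab
    have hℓle : ∀ x ∈ Set.Icc (0:ℝ) 1, ℓ x ≤ Φ x := by
      intro x hx
      by_cases hcase : 1 - δ' ≤ x
      · have hd : dist x 1 < δ := by
          rw [Real.dist_eq, abs_sub_lt_iff]
          constructor
          · linarith [hx.2]
          · have : δ' ≤ δ/2 := min_le_left _ _
            linarith
        have := hH (Set.mem_Iic.mpr hx.2) hd
        rw [Real.dist_eq, abs_sub_lt_iff] at this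
        have hg1 : g 1 ≤ Φ 1 := hgΦ 1 h11
        have hK1 : K * (x - 1) ≤ 0 :=
          mul_nonpos_of_nonneg_of_nonpos hKnn (by linarith [hx.2])
        simp only [hℓdef]
        linarith [this.2]
      · push_neg at hcase
        have hKx : K * (x - 1) ≤ K * (-δ') := by
          apply mul_le_mul_of_nonneg_left _ hKnn
          linarith
        have hKδ : K * δ' = 2 * C := by
          rw [hKdef, div_mul_cancel₀ _ hδ'pos.ne']
        have hg1 : g 1 ≤ C := (hgΦ 1 h11).trans ((abs_le.mp (hC 1 h11)).2)
        have hΦx : -C ≤ Φ x := (abs_le.mp (hC x hx)).1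
        simp only [hℓdef]
        nlinarith
    intro m hm
    exact hmem_le m hm _ ⟨ℓ, hℓconv, hℓle, rfl⟩
  -- continuity
  intro x hx
  rcases eq_or_lt_of_le hx.1 with h0 | h0
  · -- x = 0
    subst h0
    rw [Metric.continuousWithinAt_iff]
    intro ε hε
    refine ⟨ε / (g 1 - g 0 + 1), div_pos hε (by linarith), ?_⟩
    intro y hy hd
    rw [Real.dist_eq] at hd ⊢
    have h1 : g 0 ≤ g y := (hgΦ 0 h01).trans (hΦ0g y hy)
    have h2 : g y ≤ (1 - y) * g 0 + y * g 1 := hup y hy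
    have h3 : |y - 0| = y := by rw [sub_zero]; exact abs_of_nonneg hy.1
    rw [h3] at hd
    rw [abs_sub_lt_iff]
    constructor
    · have : y * (g 1 - g 0 + 1) < ε :=
        (lt_div_iff₀ (by linarith : (0:ℝ) < g 1 - g 0 + 1)).mp hd
      nlinarith [hy.1]
    · linarith
  rcases eq_or_lt_of_le hx.2 with h1 | h1
  · -- x = 1
    subst h1
    rw [Metric.continuousWithinAt_iff]
    intro ε hε
    obtain ⟨K, hKnn, hK⟩ := hkey (ε/2) (by linarith)
    refine ⟨(ε/2) / (K + 1), div_pos (by linarith) (by linarith), ?_⟩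
    intro y hy hd
    rw [Real.dist_eq] at hd ⊢
    have h1y : |y - 1| = 1 - y := by
      rw [abs_sub_comm]; exact abs_of_nonneg (by linarith [hy.2])
    rw [h1y] at hd
    have hlow : g 1 - ε/2 + K * (y - 1) ≤ g y := hK y hy
    have hupy : g y ≤ g 1 := by
      have := hup y hy
      nlinarith [hy.1, hy.2]
    have hKy : K * (1 - y) < ε/2 := by
      have := (lt_div_iff₀ (by linarith : (0:ℝ) < K + 1)).mp hd
      nlinarith [hy.2]
    rw [abs_sub_lt_iff]
    constructor
    · linarith
    · nlinarith
  · -- interior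
    have hcont : ContinuousOn g (Set.Ioo (0:ℝ) 1) :=
      (hgconv.subset Set.Ioo_subset_Icc_self (convex_Ioo 0 1)).continuousOn isOpen_Ioo
    exact ((hcont.continuousAt (isOpen_Ioo.mem_nhds ⟨h0, h1⟩)).continuousWithinAt)
end

section
/- Let f : [0,1] → ℝ be convex and non-decreasing. Then f is continuous on [0,1) and upper semicontinuous at every point; moreover if f is the convex envelope of a non-decreasing function Φ that is left-continuous at 1, then f(1) = lim_{m→1⁻} f(m). -/
/-- A convex non-decreasing `f : [0,1] → ℝ` is continuous on `[0,1)` and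
upper semicontinuous at every point; if moreover `f` is the convex envelope of a
non-decreasing `Φ` that is left-continuous at `1`, then `f(1) = lim_{m→1⁻} f(m)`. -/
theorem stmt16 (f Φ : ℝ → ℝ)
    (hconv : ConvexOn ℝ (Set.Icc 0 1) f) (hmono : MonotoneOn f (Set.Icc 0 1)) :
    ContinuousOn f (Set.Ico 0 1) ∧
    (∀ x ∈ Set.Icc (0:ℝ) 1, UpperSemicontinuousWithinAt f (Set.Icc 0 1) x) ∧
    (MonotoneOn Φ (Set.Icc 0 1) → ContinuousWithinAt Φ (Set.Iic 1) 1 →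
      (∀ m, f m = convEnvOn Φ m) →
      Filter.Tendsto f (nhdsWithin 1 (Set.Ico 0 1)) (nhds (f 1))) := by
  have h01 : (0:ℝ) ≤ 1 := zero_le_one
  have h0m : (0:ℝ) ∈ Set.Icc (0:ℝ) 1 := ⟨le_refl 0, h01⟩
  have h1m : (1:ℝ) ∈ Set.Icc (0:ℝ) 1 := ⟨h01, le_refl 1⟩
  -- Part 1: continuity on Ico 0 1
  have hIoo : ContinuousOn f (Set.Ioo 0 1) := by
    have := hconv.continuousOn_interior
    rwa [interior_Icc] at this
  have hcont : ContinuousOn f (Set.Ico 0 1) := by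
    intro x hx
    rcases eq_or_lt_of_le hx.1 with rfl | h0x
    · -- x = 0 : squeeze
      have hub : ∀ᶠ t in nhdsWithin 0 (Set.Ico (0:ℝ) 1),
          f t ≤ (1 - t) * f 0 + t * f 1 := by
        filter_upwards [self_mem_nhdsWithin] with t ht
        have h1 := hconv.2 h0m h1m (by linarith [ht.2] : (0:ℝ) ≤ 1 - t) ht.1 (by ring)
        have he : (1 - t) • (0:ℝ) + t • (1:ℝ) = t := by simp
        rw [he] at h1
        simpa using h1
      have hlb : ∀ᶠ t in nhdsWithin 0 (Set.Ico (0:ℝ) 1), f 0 ≤ f t := by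
        filter_upwards [self_mem_nhdsWithin] with t ht
        exact hmono h0m ⟨ht.1, ht.2.le⟩ ht.1
      have hupper : Filter.Tendsto (fun t => (1 - t) * f 0 + t * f 1)
          (nhdsWithin 0 (Set.Ico 0 1)) (nhds (f 0)) := by
        have hc : Continuous (fun t : ℝ => (1 - t) * f 0 + t * f 1) := by continuity
        have := (hc.tendsto 0).mono_left (nhdsWithin_le_nhds
          (s := Set.Ico (0:ℝ) 1) (a := (0:ℝ)))
        simpa using this
      exact tendsto_of_tendsto_of_tendsto_of_le_of_le' tendsto_const_nhds hupper hlb hub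
    · exact (hIoo.continuousAt (Ioo_mem_nhds h0x hx.2)).continuousWithinAt
  refine ⟨hcont, ?_, ?_⟩
  · -- Part 2: upper semicontinuity
    intro x hx
    rcases eq_or_lt_of_le hx.2 with rfl | hx1
    · intro y hy
      filter_upwards [self_mem_nhdsWithin] with z hz
      exact lt_of_le_of_lt (hmono hz h1m hz.2) hy
    · have hcw : ContinuousWithinAt f (Set.Ico 0 1) x := hcont x ⟨hx.1, hx1⟩
      have hmem : Set.Ico (0:ℝ) 1 ∈ nhdsWithin x (Set.Icc 0 1) := by
        have h2 : Set.Icc (0:ℝ) 1 ∩ Set.Iio 1 ∈ nhdsWithin x (Set.Icc 0 1) :=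
          Filter.inter_mem self_mem_nhdsWithin
            (mem_nhdsWithin_of_mem_nhds (Iio_mem_nhds hx1))
        exact Filter.mem_of_superset h2 (fun z hz => ⟨hz.1.1, hz.2⟩)
      exact (hcw.mono_of_mem_nhdsWithin hmem).upperSemicontinuousWithinAt
  -- Part 3: left limit at 1
  intro hΦmono hΦcont hfenv
  haveI hne : Filter.NeBot (nhdsWithin 1 (Set.Ico (0:ℝ) 1)) := by
    rw [← mem_closure_iff_nhdsWithin_neBot, closure_Ico (by norm_num : (0:ℝ) ≠ 1)]
    exact h1m
  set L := sSup (f '' Set.Ico 0 1) with hLdef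
  have hbdd : BddAbove (f '' Set.Ico (0:ℝ) 1) := by
    refine ⟨f 1, ?_⟩
    rintro _ ⟨x, hx, rfl⟩
    exact hmono ⟨hx.1, hx.2.le⟩ h1m hx.2.le
  -- f tends to L at 1 from the left
  have hF : Filter.Tendsto f (nhdsWithin 1 (Set.Ico 0 1)) (nhds L) := by
    set F : ℝ → ℝ := fun x => f (max x 0) with hFdef
    have hmemF : ∀ x ∈ Set.Iio (1:ℝ), max x 0 ∈ Set.Icc (0:ℝ) 1 :=
      fun x hx => ⟨le_max_right _ _, max_le hx.le h01⟩
    have hFmono : MonotoneOn F (Set.Iio (1:ℝ)) := fun x hx y hy hxy =>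
      hmono (hmemF x hx) (hmemF y hy) (max_le_max hxy le_rfl)
    have himg : F '' Set.Iio 1 = f '' Set.Ico 0 1 := by
      ext z
      constructor
      · rintro ⟨x, hx, rfl⟩
        exact ⟨max x 0, ⟨le_max_right _ _, max_lt hx zero_lt_one⟩, rfl⟩
      · rintro ⟨x, hx, rfl⟩
        exact ⟨x, hx.2, by simp [hFdef, max_eq_left hx.1]⟩
    have hFb : BddAbove (F '' Set.Iio 1) := himg ▸ hbdd
    have h1 : Filter.Tendsto F (nhdsWithin 1 (Set.Iio 1)) (nhds L) := by
      have := hFmono.tendsto_nhdsLT hFb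
      rwa [himg] at this
    have h2 : Filter.Tendsto F (nhdsWithin 1 (Set.Ico 0 1)) (nhds L) :=
      h1.mono_left (nhdsWithin_mono _ Set.Ico_subset_Iio_self)
    have hEq : F =ᶠ[nhdsWithin 1 (Set.Ico (0:ℝ) 1)] f := by
      filter_upwards [self_mem_nhdsWithin] with x hx
      simp [hFdef, max_eq_left hx.1]
    exact h2.congr' hEq
  -- f ≤ Φ on Icc
  have hSne : ∀ m : ℝ, (Φ 0) ∈ {y : ℝ | ∃ h : ℝ → ℝ, ConvexOn ℝ (Set.Icc (0:ℝ) 1) h ∧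
      (∀ x ∈ Set.Icc (0:ℝ) 1, h x ≤ Φ x) ∧ y = h m} := by
    intro m
    exact ⟨fun _ => Φ 0, convexOn_const _ (convex_Icc _ _),
      fun x hx => hΦmono h0m hx hx.1, rfl⟩
  have hfleΦ : ∀ m ∈ Set.Icc (0:ℝ) 1, f m ≤ Φ m := by
    intro m hm
    rw [hfenv m]
    refine csSup_le ⟨Φ 0, hSne m⟩ ?_
    rintro y ⟨h, _, hle, rfl⟩
    exact hle m hm
  -- any convex minorant of Φ is ≤ f on Icc
  have hge : ∀ h : ℝ → ℝ, ConvexOn ℝ (Set.Icc 0 1) h →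
      (∀ x ∈ Set.Icc (0:ℝ) 1, h x ≤ Φ x) → ∀ m ∈ Set.Icc (0:ℝ) 1, h m ≤ f m := by
    intro h hc hle m hm
    rw [hfenv m]
    refine le_csSup ⟨Φ m, ?_⟩ ⟨h, hc, hle, rfl⟩
    rintro y ⟨h', _, hle', rfl⟩
    exact hle' m hm
  -- key: Φ t ≤ L for all t ∈ [0,1)
  have key : ∀ t ∈ Set.Ico (0:ℝ) 1, Φ t ≤ L := by
    intro t ht
    have h1t : (0:ℝ) < 1 - t := by linarith [ht.2]
    set c := (Φ t - Φ 0) / (1 - t) with hcdef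
    have hc0 : 0 ≤ c :=
      div_nonneg (sub_nonneg.2 (hΦmono h0m ⟨ht.1, ht.2.le⟩ ht.1)) h1t.le
    set h : ℝ → ℝ := fun m => Φ 0 + c * max (m - t) 0 with hhdef
    have hct : c * (1 - t) = Φ t - Φ 0 := by
      rw [hcdef]
      field_simp
    have hhconv : ConvexOn ℝ (Set.Icc 0 1) h := by
      refine ⟨convex_Icc _ _, ?_⟩
      intro x hx y hy a b ha hb hab
      simp only [hhdef, smul_eq_mul]
      have hmax : max (a * x + b * y - t) 0 ≤ a * max (x - t) 0 + b * max (y - t) 0 := by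
        apply max_le
        · have h1 : a * (x - t) ≤ a * max (x - t) 0 :=
            mul_le_mul_of_nonneg_left (le_max_left _ _) ha
          have h2 : b * (y - t) ≤ b * max (y - t) 0 :=
            mul_le_mul_of_nonneg_left (le_max_left _ _) hb
          nlinarith
        · have h1 : 0 ≤ a * max (x - t) 0 :=
            mul_nonneg ha (le_max_right _ _)
          have h2 : 0 ≤ b * max (y - t) 0 :=
            mul_nonneg hb (le_max_right _ _)
          linarith
      have h2 := mul_le_mul_of_nonneg_left hmax hc0
      have h3 : a * Φ 0 + b * Φ 0 = Φ 0 := by rw [← add_mul, hab, one_mul]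
      nlinarith [h2, h3]
    have hhle : ∀ x ∈ Set.Icc (0:ℝ) 1, h x ≤ Φ x := by
      intro x hx
      rcases le_or_gt x t with hxt | hxt
      · have hm0 : max (x - t) 0 = 0 := max_eq_right (by linarith)
        simp only [hhdef, hm0, mul_zero, add_zero]
        exact hΦmono h0m hx hx.1
      · have hm0 : max (x - t) 0 = x - t := max_eq_left (by linarith)
        have hx1 : h x ≤ Φ t := by
          simp only [hhdef, hm0]
          have : c * (x - t) ≤ c * (1 - t) :=
            mul_le_mul_of_nonneg_left (by linarith [hx.2]) hc0
          linarith [hct]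
        exact hx1.trans (hΦmono ⟨ht.1, ht.2.le⟩ hx hxt.le)
    have hhL : ∀ᶠ s in nhdsWithin 1 (Set.Ico (0:ℝ) 1), h s ≤ L := by
      filter_upwards [self_mem_nhdsWithin] with s hs
      exact (hge h hhconv hhle s ⟨hs.1, hs.2.le⟩).trans (le_csSup hbdd ⟨s, hs, rfl⟩)
    have hhcont : Continuous h := by
      simp only [hhdef]
      exact continuous_const.add (continuous_const.mul
        ((continuous_id.sub continuous_const).max continuous_const))
    have hTh : Filter.Tendsto h (nhdsWithin 1 (Set.Ico (0:ℝ) 1)) (nhds (Φ t)) := by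
      have hh1 : h 1 = Φ t := by
        simp only [hhdef, max_eq_left (by linarith : (0:ℝ) ≤ 1 - t)]
        linarith [hct]
      have := (hhcont.tendsto 1).mono_left
        (nhdsWithin_le_nhds (s := Set.Ico (0:ℝ) 1) (a := (1:ℝ)))
      rwa [hh1] at this
    exact le_of_tendsto hTh hhL
  -- Φ 1 ≤ L
  have hΦ1 : Φ 1 ≤ L := by
    have hT : Filter.Tendsto Φ (nhdsWithin 1 (Set.Ico 0 1)) (nhds (Φ 1)) :=
      hΦcont.mono_left (nhdsWithin_mono _ (fun x hx => hx.2.le))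
    refine le_of_tendsto hT ?_
    filter_upwards [self_mem_nhdsWithin] with s hs
    exact key s hs
  have hLf1 : L ≤ f 1 := by
    refine csSup_le ⟨f 0, ⟨0, ⟨le_refl 0, zero_lt_one⟩, rfl⟩⟩ ?_
    rintro _ ⟨x, hx, rfl⟩
    exact hmono ⟨hx.1, hx.2.le⟩ h1m hx.2.le
  have hf1L : f 1 = L := le_antisymm ((hfleΦ 1 h1m).trans hΦ1) hLf1
  rw [hf1L]
  exact hF
end

section
/- Let (ξ_n) be a uniformly bounded sequence of random variables with values in [0,1]. Then there exist convex combinations ζ_n := Σ_{i≥n} λᵢⁿ ξᵢ (with λᵢⁿ ≥ 0, Σ_{i≥n} λᵢⁿ = 1, finitely many nonzero) and a random variable ζ with values in [0,1] such that ζ_n → ζ almost surely and in L². -/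
set_option maxHeartbeats 1000000

open MeasureTheory Filter

/-- Coercion of a finite sum in `Lp` agrees a.e. with the pointwise sum. -/
lemma lp_coeFn_finset_sum {Ω : Type*} [MeasurableSpace Ω] {P : Measure Ω}
    {α : Type*} (s : Finset α) (F : α → Lp ℝ 2 P) :
    ⇑(∑ i ∈ s, F i) =ᵐ[P] fun ω => ∑ i ∈ s, F i ω := by
  classical
  induction s using Finset.induction_on with
  | empty => simp only [Finset.sum_empty]; exact Lp.coeFn_zero ℝ 2 P
  | insert _ _ hns ih =>
    rename_i a s'
    rw [Finset.sum_insert hns]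
    filter_upwards [Lp.coeFn_add (F a) (∑ i ∈ s', F i), ih] with ω h1 h2
    rw [h1, Pi.add_apply, h2, Finset.sum_insert hns]

/-- Given a sequence of `[0,1]`-valued random variables, there exist forward
convex combinations `ζ_n = Σ_{i≥n} λᵢⁿ ξᵢ` (finitely many nonzero weights) converging a.s.
and in `L²` to some `[0,1]`-valued random variable `ζ`. -/
theorem stmt17 {Ω : Type*} [MeasurableSpace Ω] (P : Measure Ω) [IsProbabilityMeasure P]
    (ξ : ℕ → Ω → ℝ) (hmeas : ∀ n, Measurable (ξ n))
    (hξ : ∀ n ω, ξ n ω ∈ Set.Icc (0:ℝ) 1) :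
    ∃ (lam : ℕ → ℕ → ℝ) (ζ : Ω → ℝ),
      (∀ n i, 0 ≤ lam n i) ∧
      (∀ n i, i < n → lam n i = 0) ∧
      (∀ n, (Function.support (lam n)).Finite) ∧
      (∀ n, ∑ᶠ i, lam n i = 1) ∧
      (∀ ω, ζ ω ∈ Set.Icc (0:ℝ) 1) ∧
      (∀ᵐ ω ∂P, Tendsto (fun n => ∑ᶠ i, lam n i * ξ i ω) atTop (nhds (ζ ω))) ∧
      Tendsto (fun n => eLpNorm (fun ω => (∑ᶠ i, lam n i * ξ i ω) - ζ ω) 2 P)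
        atTop (nhds 0) := by
  classical
  -- membership in L²
  have hmem : ∀ n, MemLp (ξ n) 2 P := by
    intro n
    refine MemLp.of_bound (hmeas n).aestronglyMeasurable 1 (.of_forall fun ω => ?_)
    rw [Real.norm_eq_abs, abs_le]
    exact ⟨by linarith [(hξ n ω).1], (hξ n ω).2⟩
  set Ξ : ℕ → Lp ℝ 2 P := fun n => (hmem n).toLp (ξ n) with hΞdef
  have hΞnorm : ∀ n, ‖Ξ n‖ ≤ 1 := by
    intro n
    rw [Lp.norm_toLp]
    have h1 : eLpNorm (ξ n) 2 P ≤ 1 := by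
      have := eLpNorm_le_of_ae_bound (μ := P) (p := 2) (f := ξ n) (C := 1)
        (.of_forall fun ω => by
          rw [Real.norm_eq_abs, abs_le]; exact ⟨by linarith [(hξ n ω).1], (hξ n ω).2⟩)
      simpa using this
    exact ENNReal.toReal_le_of_le_ofReal zero_le_one (by simpa using h1)
  -- weights and convex hulls
  set W : ℕ → Set (ℕ →₀ ℝ) := fun n =>
    {v | (∀ i, 0 ≤ v i) ∧ (∀ i, i < n → v i = 0) ∧ v.sum (fun _ a => a) = 1} with hWdef
  set L : (ℕ →₀ ℝ) →ₗ[ℝ] Lp ℝ 2 P := Finsupp.linearCombination ℝ Ξ with hLdef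
  set A : ℕ → Set (Lp ℝ 2 P) := fun n => L '' (W n) with hAdef
  have hWmono : ∀ {n m}, n ≤ m → W m ⊆ W n := by
    rintro n m hnm v ⟨h1, h2, h3⟩
    exact ⟨h1, fun i hi => h2 i (lt_of_lt_of_le hi hnm), h3⟩
  have hAmono : ∀ {n m}, n ≤ m → A m ⊆ A n := fun hnm => Set.image_mono (hWmono hnm)
  have hWconv : ∀ n, Convex ℝ (W n) := by
    intro n v₁ hv₁ v₂ hv₂ a b ha hb hab
    refine ⟨fun i => ?_, fun i hi => ?_, ?_⟩
    · simp only [Finsupp.coe_add, Finsupp.coe_smul, Pi.add_apply, Pi.smul_apply, smul_eq_mul]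
      exact add_nonneg (mul_nonneg ha (hv₁.1 i)) (mul_nonneg hb (hv₂.1 i))
    · simp only [Finsupp.coe_add, Finsupp.coe_smul, Pi.add_apply, Pi.smul_apply, smul_eq_mul,
        hv₁.2.1 i hi, hv₂.2.1 i hi, mul_zero, add_zero]
    · rw [Finsupp.sum_add_index (fun _ _ => rfl) (fun _ _ _ _ => rfl),
        Finsupp.sum_smul_index (fun _ => rfl), Finsupp.sum_smul_index (fun _ => rfl)]
      simp only [← Finsupp.mul_sum, hv₁.2.2, hv₂.2.2, mul_one]
      exact hab
  have hAconv : ∀ n, Convex ℝ (A n) := fun n => (hWconv n).linear_image L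
  have hAne : ∀ n, (A n).Nonempty := by
    intro n
    refine ⟨L (Finsupp.single n 1), ⟨Finsupp.single n 1, ⟨?_, ?_, ?_⟩, rfl⟩⟩
    · intro i
      rcases eq_or_ne n i with rfl | h
      · rw [Finsupp.single_eq_same]; exact zero_le_one
      · rw [Finsupp.single_eq_of_ne h.symm]
    · intro i hi
      rw [Finsupp.single_eq_of_ne hi.ne]
    · simp [Finsupp.sum_single_index]
  have hAnorm : ∀ n x, x ∈ A n → ‖x‖ ≤ 1 := by
    rintro n x ⟨v, hv, rfl⟩
    rw [hLdef]
    rw [Finsupp.linearCombination_apply, Finsupp.sum]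
    calc ‖∑ i ∈ v.support, v i • Ξ i‖ ≤ ∑ i ∈ v.support, ‖v i • Ξ i‖ := norm_sum_le _ _
      _ ≤ ∑ i ∈ v.support, v i := by
          refine Finset.sum_le_sum fun i _ => ?_
          rw [norm_smul, Real.norm_eq_abs, abs_of_nonneg (hv.1 i)]
          nlinarith [hΞnorm i, hv.1 i, norm_nonneg (Ξ i)]
      _ = 1 := hv.2.2
  -- the infimum of norms
  set d : ℕ → ℝ := fun n => sInf ((fun x => ‖x‖) '' A n) with hddef
  have hbdd : ∀ n, BddBelow ((fun x => ‖x‖) '' A n) := by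
    rintro n
    exact ⟨0, by rintro y ⟨x, _, rfl⟩; exact norm_nonneg x⟩
  have hnrmne : ∀ n, ((fun x => ‖x‖) '' A n).Nonempty := fun n => (hAne n).image _
  have hd0 : ∀ n, 0 ≤ d n := fun n =>
    le_csInf (hnrmne n) (by rintro y ⟨x, _, rfl⟩; exact norm_nonneg x)
  have hd1 : ∀ n, d n ≤ 1 := by
    intro n
    obtain ⟨x, hx⟩ := hAne n
    exact csInf_le_of_le (hbdd n) ⟨x, hx, rfl⟩ (hAnorm n x hx)
  have hdmono : Monotone d := by
    intro n m hnm
    exact csInf_le_csInf (hbdd n) (hnrmne m) (Set.image_mono (hAmono hnm))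
  have hdle : ∀ n x, x ∈ A n → d n ≤ ‖x‖ := fun n x hx => csInf_le (hbdd n) ⟨x, hx, rfl⟩
  set D : ℝ := ⨆ n, d n with hDdef
  have hDbdd : BddAbove (Set.range d) := ⟨1, by rintro y ⟨n, rfl⟩; exact hd1 n⟩
  have hdD : ∀ n, d n ≤ D := fun n => le_ciSup hDbdd n
  have hdtendsto : Tendsto d atTop (nhds D) := tendsto_atTop_ciSup hdmono hDbdd
  have hD0 : 0 ≤ D := le_trans (hd0 0) (hdD 0)
  -- choose near-minimizers
  have hfex : ∀ n, ∃ x ∈ A n, ‖x‖ < d n + 1 / (n + 1) := by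
    intro n
    have hpos : (0:ℝ) < 1 / (n + 1) := by positivity
    obtain ⟨y, ⟨x, hx, rfl⟩, hlt⟩ :=
      exists_lt_of_csInf_lt (hnrmne n) (lt_add_of_pos_right (d n) hpos)
    exact ⟨x, hx, hlt⟩
  choose f hfA hfnorm using hfex
  -- Cauchy estimate
  have key : ∀ N n m, N ≤ n → N ≤ m →
      ‖f n - f m‖ ^ 2 ≤ 4 * (D + 1 / (N + 1)) ^ 2 - 4 * d N ^ 2 := by
    intro N n m hn hm
    have hfn : ‖f n‖ ≤ D + 1 / (N + 1) := by
      have h1 : (1:ℝ) / (n + 1) ≤ 1 / (N + 1) := by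
        apply one_div_le_one_div_of_le (by positivity)
        have : (N:ℝ) ≤ n := Nat.cast_le.2 hn
        linarith
      have := hfnorm n
      have := hdD n
      linarith
    have hfm : ‖f m‖ ≤ D + 1 / (N + 1) := by
      have h1 : (1:ℝ) / (m + 1) ≤ 1 / (N + 1) := by
        apply one_div_le_one_div_of_le (by positivity)
        have : (N:ℝ) ≤ m := Nat.cast_le.2 hm
        linarith
      have := hfnorm m
      have := hdD m
      linarith
    have hmid : ((1:ℝ)/2) • f n + ((1:ℝ)/2) • f m ∈ A N := by
      refine hAconv N (hAmono hn (hfA n)) (hAmono hm (hfA m)) (by norm_num) (by norm_num)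
        (by norm_num)
    have hsum : 2 * d N ≤ ‖f n + f m‖ := by
      have h1 := hdle N _ hmid
      have h2 : ((1:ℝ)/2) • f n + ((1:ℝ)/2) • f m = ((1:ℝ)/2) • (f n + f m) := by
        rw [smul_add]
      rw [h2, norm_smul] at h1
      rw [Real.norm_eq_abs] at h1
      rw [abs_of_pos (by norm_num : (0:ℝ) < 1/2)] at h1
      linarith
    have hpar := parallelogram_law_with_norm ℝ (f n) (f m)
    have h0 : 0 ≤ d N := hd0 N
    have hpar' : ‖f n + f m‖ ^ 2 + ‖f n - f m‖ ^ 2 = 2 * (‖f n‖ ^ 2 + ‖f m‖ ^ 2) := by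
      exact hpar
    have hs2 : 4 * d N ^ 2 ≤ ‖f n + f m‖ ^ 2 := by
      have := pow_le_pow_left₀ (by positivity) hsum 2
      calc 4 * d N ^ 2 = (2 * d N) ^ 2 := by ring
        _ ≤ ‖f n + f m‖ ^ 2 := this
    have hn2 : ‖f n‖ ^ 2 ≤ (D + 1 / (N + 1)) ^ 2 := pow_le_pow_left₀ (norm_nonneg _) hfn 2
    have hm2 : ‖f m‖ ^ 2 ≤ (D + 1 / (N + 1)) ^ 2 := pow_le_pow_left₀ (norm_nonneg _) hfm 2
    linarith
  have hbound_tendsto :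
      Tendsto (fun N : ℕ => 4 * (D + 1 / (N + 1 : ℝ)) ^ 2 - 4 * d N ^ 2) atTop (nhds 0) := by
    have h1 : Tendsto (fun N : ℕ => 1 / (N + 1 : ℝ)) atTop (nhds 0) :=
      tendsto_one_div_add_atTop_nhds_zero_nat
    have h2 : Tendsto (fun N : ℕ => 4 * (D + 1 / (N + 1 : ℝ)) ^ 2 - 4 * d N ^ 2) atTop
        (nhds (4 * (D + 0) ^ 2 - 4 * D ^ 2)) := by
      exact (((tendsto_const_nhds.add h1).pow 2).const_mul 4).sub
        ((hdtendsto.pow 2).const_mul 4)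
    simpa using h2
  have hcauchy : CauchySeq f := by
    rw [Metric.cauchySeq_iff']
    intro ε hε
    have := Metric.tendsto_atTop.mp hbound_tendsto (ε ^ 2) (by positivity)
    obtain ⟨N, hN⟩ := this
    refine ⟨N, fun n hn => ?_⟩
    have h1 := key N n N hn le_rfl
    have h2 := hN N le_rfl
    rw [Real.dist_eq, sub_zero] at h2
    have h3 : ‖f n - f N‖ ^ 2 < ε ^ 2 := lt_of_le_of_lt h1 (lt_of_abs_lt h2)
    rw [dist_eq_norm]
    exact lt_of_pow_lt_pow_left₀ 2 hε.le h3
  obtain ⟨g, hg⟩ := cauchySeq_tendsto_of_complete hcauchy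
  -- extract a fast subsequence
  have hext : ∀ n : ℕ, ∃ N, ∀ k ≥ N, ‖f k - g‖ ≤ (1/2 : ℝ) ^ n := by
    intro n
    obtain ⟨N, hN⟩ := Metric.tendsto_atTop.mp hg ((1/2 : ℝ) ^ n) (by positivity)
    exact ⟨N, fun k hk => by
      have := hN k hk; rw [dist_eq_norm] at this; exact this.le⟩
  obtain ⟨φ, hφmono, hφ⟩ := extraction_forall_of_eventually' hext
  -- weights of the subsequence
  have hwex : ∀ n, ∃ v ∈ W (φ n), L v = f (φ n) := by
    intro n
    obtain ⟨v, hv, he⟩ := hfA (φ n)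
    exact ⟨v, hv, he⟩
  choose w hwW hwL using hwex
  set lam : ℕ → ℕ → ℝ := fun n i => w n i with hlamdef
  have hsupp : ∀ n, Function.support (lam n) ⊆ ↑(w n).support := by
    intro n i hi
    exact Finsupp.mem_support_iff.2 hi
  -- pointwise convex combinations
  set Z : ℕ → Ω → ℝ := fun n ω => ∑ i ∈ (w n).support, w n i * ξ i ω with hZdef
  have hZfinsum : ∀ n ω, ∑ᶠ i, lam n i * ξ i ω = Z n ω := by
    intro n ω
    apply finsum_eq_sum_of_support_subset
    intro i hi
    apply hsupp n
    intro h0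
    exact hi (by simp [h0])
  have hwsum : ∀ n, ∑ i ∈ (w n).support, w n i = 1 := fun n => (hwW n).2.2
  have hZ01 : ∀ n ω, Z n ω ∈ Set.Icc (0:ℝ) 1 := by
    intro n ω
    constructor
    · exact Finset.sum_nonneg fun i _ => mul_nonneg ((hwW n).1 i) (hξ i ω).1
    · calc ∑ i ∈ (w n).support, w n i * ξ i ω ≤ ∑ i ∈ (w n).support, w n i :=
            Finset.sum_le_sum fun i _ =>
              mul_le_of_le_one_right ((hwW n).1 i) (hξ i ω).2
        _ = 1 := hwsum n
  have hZmeas : ∀ n, Measurable (Z n) :=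
    fun n => Finset.measurable_sum _ fun i _ => (hmeas i).const_mul _
  -- a.e. identification of Z n with f (φ n)
  have hae : ∀ n, (⇑(f (φ n)) : Ω → ℝ) =ᵐ[P] Z n := by
    intro n
    rw [← hwL n, hLdef]
    have h1 : L (w n) = ∑ i ∈ (w n).support, w n i • Ξ i := by
      rw [hLdef, Finsupp.linearCombination_apply, Finsupp.sum]
    rw [← hLdef, h1]
    have h2 := lp_coeFn_finset_sum (w n).support (fun i => w n i • Ξ i)
    have h3 : ∀ᵐ ω ∂P, ∀ i, (w n i • Ξ i) ω = w n i * ξ i ω := by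
      rw [ae_all_iff]
      intro i
      filter_upwards [Lp.coeFn_smul (w n i) (Ξ i), (hmem i).coeFn_toLp] with ω ha hb
      simp [ha, hb]
      exact Or.inl hb
    filter_upwards [h2, h3] with ω h2 h3
    rw [h2]
    exact Finset.sum_congr rfl fun i _ => h3 i
  -- the L² errors
  set e : ℕ → ENNReal := fun n => eLpNorm (fun ω => Z n ω - g ω) 2 P with hedef
  have hee : ∀ n, e n = eLpNorm (⇑(f (φ n) - g)) 2 P := by
    intro n
    refine eLpNorm_congr_ae ?_
    filter_upwards [hae n, Lp.coeFn_sub (f (φ n)) g] with ω h1 h2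
    rw [h2, Pi.sub_apply, h1]
  have hebound : ∀ n, e n ≤ ENNReal.ofReal ((1/2 : ℝ) ^ n) := by
    intro n
    rw [hee n]
    have h1 : ‖f (φ n) - g‖ ≤ (1/2 : ℝ) ^ n := hφ n
    rw [Lp.norm_def] at h1
    exact ENNReal.le_ofReal_iff_toReal_le (Lp.eLpNorm_lt_top _).ne (by positivity) |>.2 h1
  -- Borel–Cantelli: a.e. convergence of Z n to g
  set h : ℕ → Ω → ℝ := fun n ω => Z n ω - g ω with hhdef
  have hhmeas : ∀ n, Measurable (h n) :=
    fun n => (hZmeas n).sub (Lp.stronglyMeasurable g).measurable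
  have hint : ∀ n, ∫⁻ ω, (‖h n ω‖₊ : ENNReal) ^ 2 ∂P = e n ^ 2 := by
    intro n
    have h2 : e n = (∫⁻ ω, (‖h n ω‖₊ : ENNReal) ^ (2:ℝ) ∂P) ^ ((1:ℝ)/2) := by
      have h2' : e n = eLpNorm (h n) 2 P := rfl
      rw [h2', eLpNorm_eq_lintegral_rpow_enorm_toReal two_ne_zero (by norm_num)]
      simp only [enorm_eq_nnnorm]
      norm_num
    have h3 : ∫⁻ ω, (‖h n ω‖₊ : ENNReal) ^ (2:ℝ) ∂P
        = ∫⁻ ω, (‖h n ω‖₊ : ENNReal) ^ 2 ∂P := by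
      refine lintegral_congr fun ω => ?_
      rw [← ENNReal.rpow_natCast (‖h n ω‖₊ : ENNReal) 2]
      norm_num
    rw [h2, h3, ← ENNReal.rpow_natCast _ 2, ← ENNReal.rpow_mul]
    norm_num
  have htsum : ∑' n, ∫⁻ ω, (‖h n ω‖₊ : ENNReal) ^ 2 ∂P ≠ ⊤ := by
    have hb : ∀ n, ∫⁻ ω, (‖h n ω‖₊ : ENNReal) ^ 2 ∂P ≤ ENNReal.ofReal (1/4:ℝ) ^ n := by
      intro n
      rw [hint n]
      calc e n ^ 2 ≤ (ENNReal.ofReal ((1/2:ℝ)^n)) ^ 2 := pow_le_pow_left' (hebound n) 2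
        _ = (ENNReal.ofReal (1/2:ℝ)) ^ (n*2) := by
            rw [ENNReal.ofReal_pow (by norm_num), ← pow_mul]
        _ = ENNReal.ofReal (1/4:ℝ) ^ n := by
            rw [show (1/4:ℝ) = (1/2)^2 by norm_num,
              ENNReal.ofReal_pow (by norm_num), ← pow_mul, mul_comm]
    have hgeo : (∑' n, ENNReal.ofReal (1/4:ℝ) ^ n) ≠ ⊤ := by
      rw [ENNReal.tsum_geometric]
      refine ENNReal.inv_ne_top.2 ?_
      have hlt : ENNReal.ofReal (1/4:ℝ) < 1 := by
        rw [← ENNReal.ofReal_one]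
        exact ENNReal.ofReal_lt_ofReal_iff (by norm_num) |>.2 (by norm_num)
      exact (tsub_pos_of_lt hlt).ne'
    exact fun hcon => hgeo (top_le_iff.1 (hcon ▸ ENNReal.tsum_le_tsum hb))
  have hlint : ∫⁻ ω, ∑' n, (‖h n ω‖₊ : ENNReal) ^ 2 ∂P ≠ ⊤ := by
    rw [lintegral_tsum (fun n =>
      ((hhmeas n).nnnorm.coe_nnreal_ennreal.pow_const 2).aemeasurable)]
    exact htsum
  have haefin : ∀ᵐ ω ∂P, ∑' n, (‖h n ω‖₊ : ENNReal) ^ 2 < ⊤ :=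
    ae_lt_top (Measurable.ennreal_tsum fun n =>
      (hhmeas n).nnnorm.coe_nnreal_ennreal.pow_const 2) hlint
  have haetendsto : ∀ᵐ ω ∂P, Tendsto (fun n => Z n ω) atTop (nhds (g ω)) := by
    filter_upwards [haefin] with ω hω
    have hsummable : Summable (fun n => ‖h n ω‖₊ ^ 2) := by
      rw [← ENNReal.tsum_coe_ne_top_iff_summable]
      simpa [ENNReal.coe_pow] using hω.ne
    have h2 : Tendsto (fun n => ‖h n ω‖ ^ 2) atTop (nhds 0) := by
      have hs : Summable (fun n => ‖h n ω‖ ^ 2) := by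
        have := NNReal.summable_coe.2 hsummable
        simpa [NNReal.coe_pow] using this
      simpa using hs.tendsto_atTop_zero
    have h3 : Tendsto (fun n => ‖h n ω‖) atTop (nhds 0) := by
      have h4 := (Real.continuous_sqrt.tendsto' 0 0 Real.sqrt_zero).comp h2
      refine h4.congr fun n => ?_
      simp only [Function.comp_apply]
      rw [Real.sqrt_sq (norm_nonneg _)]
    have h5 : Tendsto (fun n => h n ω) atTop (nhds 0) :=
      tendsto_zero_iff_norm_tendsto_zero.2 h3
    have h6 : Tendsto (fun n => h n ω + g ω) atTop (nhds (0 + g ω)) :=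
      h5.add tendsto_const_nhds
    have h7 : (fun n => h n ω + g ω) = fun n => Z n ω :=
      funext fun n => sub_add_cancel _ _
    rw [h7] at h6
    simpa using h6
  have haeIcc : ∀ᵐ ω ∂P, g ω ∈ Set.Icc (0:ℝ) 1 := by
    filter_upwards [haetendsto] with ω hω
    exact isClosed_Icc.mem_of_tendsto hω (Eventually.of_forall fun n => hZ01 n ω)
  set ζ : Ω → ℝ := fun ω => max 0 (min 1 (g ω)) with hζdef
  have hζIcc : ∀ ω, ζ ω ∈ Set.Icc (0:ℝ) 1 :=
    fun ω => ⟨le_max_left _ _, max_le zero_le_one (min_le_left _ _)⟩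
  have hζae : ∀ᵐ ω ∂P, ζ ω = g ω := by
    filter_upwards [haeIcc] with ω hω
    show max 0 (min 1 (g ω)) = g ω
    rw [min_eq_right hω.2, max_eq_right hω.1]
  refine ⟨lam, ζ, fun n i => (hwW n).1 i, ?_, ?_, ?_, hζIcc, ?_, ?_⟩
  · intro n i hi
    exact (hwW n).2.1 i (lt_of_lt_of_le hi (hφmono.le_apply))
  · intro n
    exact Set.Finite.subset (w n).support.finite_toSet (hsupp n)
  · intro n
    rw [finsum_eq_sum_of_support_subset _ (hsupp n)]
    exact hwsum n
  · filter_upwards [haetendsto, hζae] with ω h1 h2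
    rw [h2]
    have he7 : (fun n => ∑ᶠ i, lam n i * ξ i ω) = fun n => Z n ω :=
      funext fun n => hZfinsum n ω
    rw [he7]
    exact h1
  · have hcongr : ∀ n, eLpNorm (fun ω => (∑ᶠ i, lam n i * ξ i ω) - ζ ω) 2 P = e n := by
      intro n
      refine eLpNorm_congr_ae ?_
      filter_upwards [hζae] with ω h2
      rw [hZfinsum n ω, h2]
    simp only [hcongr]
    have hb : Tendsto (fun n => ENNReal.ofReal ((1/2:ℝ)^n)) atTop (nhds 0) := by
      rw [← ENNReal.ofReal_zero]
      exact (ENNReal.continuous_ofReal.tendsto 0).comp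
        (tendsto_pow_atTop_nhds_zero_of_lt_one (by norm_num) (by norm_num))
    exact tendsto_of_tendsto_of_tendsto_of_le_of_le tendsto_const_nhds hb
      (fun n => zero_le) hebound
end
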